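/- Let A ∈ ℂ^{n×N}, let x0, x ∈ ℝ^n ⊆ ℂ^n satisfy ⟨x0, x⟩ > 0, and let γ = (1−t) x0 + t x ∈ ℝ^n for some t ∈ [0,1] (a convex combination, necessarily nonzero). Define λ̃2(γ) = sup{ ‖Im(B_γ^* u)‖ : u ∈ ℝ^n, ⟨u, γ⟩ = 0, ‖u‖ = 1 }. Then ‖Im(B_γ^* (x − x0))‖ ≤ λ̃2(γ) · ‖x − x0‖. -/

import Mathlib

noncomputable def phase (z : ℂ) : ℂ := if z = 0 then 1 else z / (‖z‖ : ℂ)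

lemma phase_conj_mul (z : ℂ) : (starRingEnd ℂ) (phase z) * z = (‖z‖ : ℂ) := by
  unfold phase
  by_cases h : z = 0
  · simp [h]
  · rw [if_neg h, map_div₀, Complex.conj_ofReal, div_mul_eq_mul_div, mul_comm,
      Complex.mul_conj']
    have h2 : (‖z‖ : ℂ) ≠ 0 := by exact_mod_cast norm_ne_zero_iff.mpr h
    field_simp

lemma abs_phase (z : ℂ) : ‖phase z‖ = 1 := by
  unfold phase
  by_cases h : z = 0
  · simp [h]
  · rw [if_neg h]
    simp [norm_div, h]

/-- real version of the second-singular-value bound. If `x0, x` are real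
vectors with `⟨x0, x⟩ > 0` and `γ = (1-t)x0 + tx` is a convex combination, then
`‖Im(B_γ^* (x - x0))‖ ≤ λ̃2(γ) ‖x - x0‖`, where
`(B_γ^* ζ) j = conj(phase(a_j^* γ))·(a_j^* ζ)` (columns `a j` of `A`) and
`λ̃2(γ) = sup{‖Im(B_γ^* u)‖ : u real, ⟨u, γ⟩ = 0, ‖u‖ = 1}`. -/
theorem real_second_singular_value_bound {n N : ℕ}
    (a : Fin N → EuclideanSpace ℂ (Fin n))
    (x0 x : EuclideanSpace ℂ (Fin n))
    (hx0real : ∀ i, (x0 i).im = 0) (hxreal : ∀ i, (x i).im = 0)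
    (hpos : 0 < (inner ℂ x0 x : ℂ).re)
    (t : ℝ) (ht0 : 0 ≤ t) (ht1 : t ≤ 1)
    (γ : EuclideanSpace ℂ (Fin n)) (hγ : γ = (1 - t) • x0 + t • x)
    (Bstar : EuclideanSpace ℂ (Fin n) → EuclideanSpace ℂ (Fin n) → Fin N → ℂ)
    (hB : ∀ y ζ j, Bstar y ζ j =
      (starRingEnd ℂ) (phase (inner ℂ (a j) y : ℂ)) * (inner ℂ (a j) ζ : ℂ))
    (lam : ℝ)
    (hlam : lam = sSup {r : ℝ | ∃ u : EuclideanSpace ℂ (Fin n),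
      (∀ i, (u i).im = 0) ∧ (inner ℂ u γ : ℂ).re = 0 ∧ ‖u‖ = 1 ∧
      r = Real.sqrt (∑ j, ((Bstar γ u j).im) ^ 2)}) :
    Real.sqrt (∑ j, ((Bstar γ (x - x0) j).im) ^ 2) ≤ lam * ‖x - x0‖ := by
  set S := {r : ℝ | ∃ u : EuclideanSpace ℂ (Fin n),
      (∀ i, (u i).im = 0) ∧ (inner ℂ u γ : ℂ).re = 0 ∧ ‖u‖ = 1 ∧
      r = Real.sqrt (∑ j, ((Bstar γ u j).im) ^ 2)} with hS
  set d : EuclideanSpace ℂ (Fin n) := x - x0 with hd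
  -- lam is nonneg
  have hSnn : ∀ r ∈ S, (0:ℝ) ≤ r := by
    rintro r ⟨u, _, _, _, rfl⟩
    exact Real.sqrt_nonneg _
  have hlam0 : 0 ≤ lam := hlam ▸ Real.sSup_nonneg hSnn
  -- S is bounded above
  have hbdd : BddAbove S := by
    refine ⟨Real.sqrt (∑ j, ‖a j‖ ^ 2), ?_⟩
    rintro r ⟨u, hureal, huγ, hu1, rfl⟩
    apply Real.sqrt_le_sqrt
    apply Finset.sum_le_sum
    intro j _
    have h1 : |(Bstar γ u j).im| ≤ ‖a j‖ := by
      calc |(Bstar γ u j).im| ≤ ‖Bstar γ u j‖ := Complex.abs_im_le_norm _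
        _ = ‖(inner ℂ (a j) u : ℂ)‖ := by
            rw [hB, norm_mul, Complex.norm_conj, abs_phase, one_mul]
        _ ≤ ‖a j‖ * ‖u‖ := by exact norm_inner_le_norm _ _
        _ = ‖a j‖ := by rw [hu1, mul_one]
    calc (Bstar γ u j).im ^ 2 = |(Bstar γ u j).im| ^ 2 := (sq_abs _).symm
      _ ≤ ‖a j‖ ^ 2 := pow_le_pow_left₀ (abs_nonneg _) h1 2
  -- γ is nonzero
  have hx0ne : x0 ≠ 0 := by rintro rfl; simp at hpos
  have hγre : 0 < (inner ℂ x0 γ : ℂ).re := by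
    have h1 : (inner ℂ x0 γ : ℂ) = ((1 - t : ℝ) : ℂ) * inner ℂ x0 x0 + ((t : ℝ) : ℂ) * inner ℂ x0 x := by
      rw [hγ, inner_add_right, ← Complex.coe_smul (1 - t) x0, ← Complex.coe_smul t x,
        inner_smul_right, inner_smul_right]
    have h2 : (inner ℂ x0 x0 : ℂ).re = ‖x0‖ ^ 2 := by
      rw [@inner_self_eq_norm_sq_to_K ℂ]
      norm_cast
    rw [h1, Complex.add_re, Complex.re_ofReal_mul, Complex.re_ofReal_mul, h2]
    have hn0 : 0 < ‖x0‖ ^ 2 := pow_pos (norm_pos_iff.mpr hx0ne) 2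
    rcases eq_or_lt_of_le ht0 with h | h
    · rw [← h]; nlinarith
    · nlinarith [mul_pos h hpos, mul_nonneg (sub_nonneg.2 ht1) hn0.le]
  have hγne : γ ≠ 0 := by
    rintro rfl
    simp at hγre
  have hγn2 : (0:ℝ) < ‖γ‖ ^ 2 := by
    have := norm_pos_iff.mpr hγne
    positivity
  set α : ℝ := (inner ℂ γ d : ℂ).re / ‖γ‖ ^ 2 with hα
  set w : EuclideanSpace ℂ (Fin n) := d - ((α : ℂ)) • γ with hw
  have hαγ : α * ‖γ‖ ^ 2 = (inner ℂ γ d : ℂ).re := by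
    rw [hα]; field_simp
  have hdγre : (inner ℂ d γ : ℂ).re = (inner ℂ γ d : ℂ).re := by
    rw [← inner_conj_symm γ d, Complex.conj_re]
  have hγγ : (inner ℂ γ γ : ℂ).re = ‖γ‖ ^ 2 := by
    have h6 := @inner_self_eq_norm_sq ℂ _ _ _ _ γ
    simpa using h6
  have hwγ : (inner ℂ w γ : ℂ).re = 0 := by
    rw [hw, inner_sub_left, inner_smul_left, Complex.conj_ofReal, Complex.sub_re,
      Complex.re_ofReal_mul, hγγ, hdγre, hαγ, sub_self]
  have hdecomp : ∀ j, (inner ℂ (a j) d : ℂ) = inner ℂ (a j) w + (α : ℂ) * inner ℂ (a j) γ := by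
    intro j
    have h4 : d = w + (α : ℂ) • γ := by rw [hw, sub_add_cancel]
    rw [h4, inner_add_right, inner_smul_right]
  have hdw : ∀ j, (Bstar γ d j).im = (Bstar γ w j).im := by
    intro j
    rw [hB, hB, hdecomp j, mul_add]
    have : (starRingEnd ℂ) (phase (inner ℂ (a j) γ)) * ((α:ℂ) * (inner ℂ (a j) γ : ℂ))
        = (α:ℂ) * (‖(inner ℂ (a j) γ : ℂ)‖ : ℂ) := by
      rw [mul_comm ((α:ℂ)) _, ← mul_assoc, phase_conj_mul]
      ring
    rw [this]
    simp [Complex.add_im, Complex.im_ofReal_mul]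
  -- w real
  have hdreal : ∀ i, (d i).im = 0 := by
    intro i
    have : d i = x i - x0 i := rfl
    rw [this, Complex.sub_im, hxreal i, hx0real i, sub_zero]
  have hγreal : ∀ i, (γ i).im = 0 := by
    intro i
    have h5 : γ i = (1 - t) • (x0 i) + t • (x i) := by rw [hγ]; rfl
    rw [h5, Complex.add_im]
    rw [show (1 - t) • (x0 i) = ((1 - t : ℝ) : ℂ) * x0 i from rfl]
    rw [show t • (x i) = ((t : ℝ) : ℂ) * x i from rfl]
    rw [Complex.im_ofReal_mul, Complex.im_ofReal_mul, hx0real i, hxreal i]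
    ring
  have hwreal : ∀ i, (w i).im = 0 := by
    intro i
    have : w i = d i - (α : ℂ) * γ i := rfl
    rw [this, Complex.sub_im, hdreal i, Complex.im_ofReal_mul, hγreal i]
    ring
  -- norm comparison
  have hwd : ‖w‖ ≤ ‖d‖ := by
    have hre : (inner ℂ d ((α:ℂ) • γ) : ℂ).re = α ^ 2 * ‖γ‖ ^ 2 := by
      rw [inner_smul_right, Complex.re_ofReal_mul, hdγre, ← hαγ]
      ring
    have hn : ‖(α:ℂ) • γ‖ ^ 2 = α ^ 2 * ‖γ‖ ^ 2 := by
      rw [norm_smul, mul_pow, Complex.norm_real, Real.norm_eq_abs, sq_abs]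
    have h1 : ‖w‖ ^ 2 = ‖d‖ ^ 2 - α ^ 2 * ‖γ‖ ^ 2 := by
      have h7 := @norm_sub_sq ℂ _ _ _ _ d ((α:ℂ) • γ)
      simp only [RCLike.re_to_complex] at h7
      rw [hw, h7, hre, hn]
      ring
    nlinarith [norm_nonneg w, norm_nonneg d]
  by_cases hw0 : w = 0
  · have hzero : ∀ j, (Bstar γ d j).im = 0 := by
      intro j
      rw [hdw j, hw0, hB]
      simp
    have : (∑ j, (Bstar γ d j).im ^ 2) = 0 :=
      Finset.sum_eq_zero fun j _ => by rw [hzero j]; ring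
    rw [this, Real.sqrt_zero]
    exact mul_nonneg hlam0 (norm_nonneg _)
  · have hwn : (0:ℝ) < ‖w‖ := norm_pos_iff.mpr hw0
    set u : EuclideanSpace ℂ (Fin n) := ((‖w‖⁻¹ : ℝ) : ℂ) • w with hu
    have hureal : ∀ i, (u i).im = 0 := by
      intro i
      have : u i = ((‖w‖⁻¹ : ℝ) : ℂ) * w i := rfl
      rw [this, Complex.im_ofReal_mul, hwreal i, mul_zero]
    have huγ : (inner ℂ u γ : ℂ).re = 0 := by
      rw [hu, inner_smul_left, Complex.conj_ofReal, Complex.re_ofReal_mul, hwγ, mul_zero]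
    have hu1 : ‖u‖ = 1 := by
      rw [hu, norm_smul]
      simp [abs_of_nonneg (inv_nonneg.mpr (norm_nonneg w)), inv_mul_cancel₀ (ne_of_gt hwn)]
    have hwu : ∀ j, (Bstar γ w j).im = ‖w‖ * (Bstar γ u j).im := by
      intro j
      have h1 : (inner ℂ (a j) w : ℂ) = ((‖w‖:ℝ):ℂ) * inner ℂ (a j) u := by
        rw [hu, inner_smul_right, ← mul_assoc]
        norm_cast
        rw [mul_inv_cancel₀ (ne_of_gt hwn), Complex.ofReal_one, one_mul]
      rw [hB, hB, h1]
      rw [show (starRingEnd ℂ) (phase (inner ℂ (a j) γ)) * (((‖w‖:ℝ):ℂ) * inner ℂ (a j) u)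
        = ((‖w‖:ℝ):ℂ) * ((starRingEnd ℂ) (phase (inner ℂ (a j) γ)) * inner ℂ (a j) u) by ring]
      exact Complex.im_ofReal_mul _ _
    have hmem : Real.sqrt (∑ j, (Bstar γ u j).im ^ 2) ∈ S :=
      ⟨u, hureal, huγ, hu1, rfl⟩
    have hrlam : Real.sqrt (∑ j, (Bstar γ u j).im ^ 2) ≤ lam :=
      hlam ▸ le_csSup hbdd hmem
    have hsum : (∑ j, (Bstar γ d j).im ^ 2) = ‖w‖ ^ 2 * ∑ j, (Bstar γ u j).im ^ 2 := by
      rw [Finset.mul_sum]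
      apply Finset.sum_congr rfl
      intro j _
      rw [hdw j, hwu j]
      ring
    rw [hsum, Real.sqrt_mul (by positivity), Real.sqrt_sq (norm_nonneg w)]
    calc ‖w‖ * Real.sqrt (∑ j, (Bstar γ u j).im ^ 2)
        ≤ ‖d‖ * lam := by
          apply mul_le_mul hwd hrlam (Real.sqrt_nonneg _) (norm_nonneg _)
      _ = lam * ‖d‖ := mul_comm _ _
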